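/- There exists a set of 12 points in the plane in general position with exactly 153 crossings. (The rectilinear crossing number 153 of the complete graph K₁₂ is attained.) -/

import Mathlib

set_option maxRecDepth 10000
set_option maxHeartbeats 4000000


/-- The orientation determinant of the ordered triple of points `p, q, r ∈ ℝ²`. -/
def odet (p q r : ℝ × ℝ) : ℝ :=
  (q.1 - p.1) * (r.2 - p.2) - (q.2 - p.2) * (r.1 - p.1)

/-- A set of points in the plane is in general position if no three of its points are
collinear. -/
def GenPos (S : Set (ℝ × ℝ)) : Prop :=
  ∀ p ∈ S, ∀ q ∈ S, ∀ r ∈ S, p ≠ q → p ≠ r → q ≠ r → odet p q r ≠ 0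

/-- The number of crossings of a planar point set `S`: the number of unordered pairs
`{ {a,b}, {c,d} }` of disjoint two-element subsets of `S` such that the open segment
joining `a` and `b` intersects the open segment joining `c` and `d`. -/
noncomputable def cr (S : Set (ℝ × ℝ)) : ℕ :=
  Nat.card {x : Sym2 (Sym2 (ℝ × ℝ)) //
    ∃ a b c d : ℝ × ℝ, x = s(s(a, b), s(c, d)) ∧
      a ∈ S ∧ b ∈ S ∧ c ∈ S ∧ d ∈ S ∧ a ≠ b ∧ c ≠ d ∧
      ({a, b} : Set (ℝ × ℝ)) ∩ {c, d} = ∅ ∧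
      (openSegment ℝ a b ∩ openSegment ℝ c d).Nonempty}

/- ### auxiliary lemmas -/


lemma odet_self1 (a b : ℝ × ℝ) : odet a b a = 0 := by simp only [odet]; ring
lemma odet_self2 (a b : ℝ × ℝ) : odet a b b = 0 := by simp only [odet]; ring

lemma odet_affine (p q a b : ℝ × ℝ) (t : ℝ) :
    odet p q ((1 - t) • a + t • b) = (1 - t) * odet p q a + t * odet p q b := by
  simp [odet, Prod.fst_add, Prod.snd_add, Prod.smul_fst, Prod.smul_snd, smul_eq_mul]
  ring

lemma sign_aux {X Y s : ℝ} (hX : X ≠ 0) (hs0 : 0 < s) (hs1 : s < 1)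
    (h : (1 - s) * X + s * Y = 0) : X * Y < 0 := by
  have hX2 : 0 < X * X := mul_self_pos.mpr hX
  have h2 : (1 - s) * (X * X) + s * (X * Y) = 0 := by linear_combination X * h
  by_contra hc
  push_neg at hc
  have h3 : 0 ≤ s * (X * Y) := mul_nonneg hs0.le hc
  have h4 : 0 < (1 - s) * (X * X) := mul_pos (by linarith) hX2
  linarith

lemma param_mem {X Y : ℝ} (h : X * Y < 0) : 0 < X / (X - Y) ∧ X / (X - Y) < 1 := by
  rcases mul_neg_iff.mp h with ⟨hX, hY⟩ | ⟨hX, hY⟩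
  · have hne : (0:ℝ) < X - Y := by linarith
    exact ⟨div_pos hX hne, by rw [div_lt_one hne]; linarith⟩
  · have hne : X - Y < 0 := by linarith
    have hne' : X - Y ≠ 0 := ne_of_lt hne
    constructor
    · exact div_pos_of_neg_of_neg hX hne
    · have hdec : X / (X - Y) = 1 + Y / (X - Y) := by field_simp; ring
      have : Y / (X - Y) < 0 := div_neg_of_pos_of_neg hY hne
      linarith

lemma cross_iff {a b c d : ℝ × ℝ}
    (h1 : odet a b c ≠ 0) (h3 : odet c d a ≠ 0) :
    (openSegment ℝ a b ∩ openSegment ℝ c d).Nonempty ↔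
      odet a b c * odet a b d < 0 ∧ odet c d a * odet c d b < 0 := by
  rw [openSegment_eq_image, openSegment_eq_image]
  constructor
  · rintro ⟨x, hx1, hx2⟩
    obtain ⟨t, ⟨ht0, ht1⟩, rfl⟩ := hx1
    obtain ⟨s, ⟨hs0, hs1⟩, hx⟩ := hx2
    have hx' : (1 - s) • c + s • d = (1 - t) • a + t • b := hx
    constructor
    · have h0 : (1 - s) * odet a b c + s * odet a b d = 0 := by
        rw [← odet_affine, hx', odet_affine, odet_self1, odet_self2]; ring
      exact sign_aux h1 hs0 hs1 h0
    · have h0 : (1 - t) * odet c d a + t * odet c d b = 0 := by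
        rw [← odet_affine, ← hx', odet_affine, odet_self1, odet_self2]; ring
      exact sign_aux h3 ht0 ht1 h0
  · rintro ⟨hc1, hc2⟩
    set e1 := odet c d a with he1
    set e2 := odet c d b with he2
    set f1 := odet a b c with hf1
    set f2 := odet a b d with hf2
    obtain ⟨ht0, ht1⟩ := param_mem hc2
    obtain ⟨hs0, hs1⟩ := param_mem hc1
    have he : e1 - e2 ≠ 0 := by
      intro h; rw [h] at ht0; simp at ht0
    have hf : f1 - f2 ≠ 0 := by
      intro h; rw [h] at hs0; simp at hs0
    set t := e1 / (e1 - e2) with ht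
    set s := f1 / (f1 - f2) with hs
    have key : (1 - t) • a + t • b = (1 - s) • c + s • d := by
      have k1 : (1 - t) * a.1 + t * b.1 = (1 - s) * c.1 + s * d.1 := by
        rw [ht, hs]; field_simp; simp only [he1, he2, hf1, hf2, odet]; ring
      have k2 : (1 - t) * a.2 + t * b.2 = (1 - s) * c.2 + s * d.2 := by
        rw [ht, hs]; field_simp; simp only [he1, he2, hf1, hf2, odet]; ring
      apply Prod.ext <;>
        simp only [Prod.fst_add, Prod.snd_add, Prod.smul_fst, Prod.smul_snd, smul_eq_mul]
      · exact k1
      · exact k2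
    exact ⟨(1 - t) • a + t • b, ⟨t, ⟨ht0, ht1⟩, rfl⟩, ⟨s, ⟨hs0, hs1⟩, key.symm⟩⟩

/- ### the point configuration -/

def q12 : Fin 12 → ℤ × ℤ :=
  ![(-12,18),(35,55),(23,-45),(10,-11),(29,49),(15,-19),(17,39),(-42,32),(25,-51),(-7,21),(16,24),(-37,30)]

noncomputable def pts (i : Fin 12) : ℝ × ℝ := (((q12 i).1 : ℝ), ((q12 i).2 : ℝ))

def odZ (i j k : Fin 12) : ℤ :=
  ((q12 j).1 - (q12 i).1) * ((q12 k).2 - (q12 i).2) -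
    ((q12 j).2 - (q12 i).2) * ((q12 k).1 - (q12 i).1)

def Pq (i j k l : Fin 12) : Prop :=
  odZ i j k * odZ i j l < 0 ∧ odZ k l i * odZ k l j < 0

instance (i j k l : Fin 12) : Decidable (Pq i j k l) := by unfold Pq; infer_instance

def Qq (t : Fin 12 × Fin 12 × Fin 12 × Fin 12) : Prop :=
  t.1 < t.2.1 ∧ t.2.2.1 < t.2.2.2 ∧ t.1 < t.2.2.1 ∧ Pq t.1 t.2.1 t.2.2.1 t.2.2.2

instance : DecidablePred Qq := fun t => by unfold Qq; infer_instance

lemma q12_inj : Function.Injective q12 := by decide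

lemma odZ_ne : ∀ i j k : Fin 12, i ≠ j → i ≠ k → j ≠ k → odZ i j k ≠ 0 := by decide

lemma count : Fintype.card {t : Fin 12 × Fin 12 × Fin 12 × Fin 12 // Qq t} = 153 := by decide

lemma pts_inj : Function.Injective pts := by
  intro i j h
  apply q12_inj
  have h1 := congrArg Prod.fst h
  have h2 := congrArg Prod.snd h
  simp only [pts] at h1 h2
  exact Prod.ext (by exact_mod_cast h1) (by exact_mod_cast h2)

lemma odet_pts (i j k : Fin 12) : odet (pts i) (pts j) (pts k) = (odZ i j k : ℝ) := by
  simp only [odet, pts, odZ]; push_cast; ring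

lemma odZ_swap (i j k : Fin 12) : odZ j i k = - odZ i j k := by
  simp only [odZ]; ring

lemma odZ_deg1 (i k : Fin 12) : odZ i i k = 0 := by simp only [odZ]; ring
lemma odZ_deg2 (i j : Fin 12) : odZ i j i = 0 := by simp only [odZ]; ring
lemma odZ_deg3 (i j : Fin 12) : odZ i j j = 0 := by simp only [odZ]; ring

lemma Pq_distinct {i j k l : Fin 12} (h : Pq i j k l) :
    i ≠ j ∧ k ≠ l ∧ i ≠ k ∧ i ≠ l ∧ j ≠ k ∧ j ≠ l := by
  obtain ⟨h1, h2⟩ := h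
  have n1 : odZ i j k ≠ 0 := by intro e; rw [e] at h1; simp at h1
  have n2 : odZ i j l ≠ 0 := by intro e; rw [e] at h1; simp at h1
  have n3 : odZ k l i ≠ 0 := by intro e; rw [e] at h2; simp at h2
  refine ⟨?_, ?_, ?_, ?_, ?_, ?_⟩
  · rintro rfl; exact n1 (odZ_deg1 _ _)
  · rintro rfl; exact n3 (odZ_deg1 _ _)
  · rintro rfl; exact n1 (odZ_deg2 _ _)
  · rintro rfl; exact n2 (odZ_deg2 _ _)
  · rintro rfl; exact n1 (odZ_deg3 _ _)
  · rintro rfl; exact n2 (odZ_deg3 _ _)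

lemma Pq_swap1 {i j k l : Fin 12} (h : Pq i j k l) : Pq j i k l := by
  obtain ⟨h1, h2⟩ := h
  constructor
  · rw [odZ_swap i j k, odZ_swap i j l, neg_mul_neg]; exact h1
  · rw [mul_comm]; exact h2

lemma Pq_swap2 {i j k l : Fin 12} (h : Pq i j k l) : Pq i j l k := by
  obtain ⟨h1, h2⟩ := h
  constructor
  · rw [mul_comm]; exact h1
  · rw [odZ_swap k l i, odZ_swap k l j, neg_mul_neg]; exact h2

lemma Pq_swap12 {i j k l : Fin 12} (h : Pq i j k l) : Pq k l i j := ⟨h.2, h.1⟩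

/- ### the point set -/

noncomputable def S12 : Finset (ℝ × ℝ) := Finset.univ.image pts

lemma mem_S12 {p : ℝ × ℝ} : p ∈ (S12 : Set (ℝ × ℝ)) ↔ ∃ i, pts i = p := by
  simp [S12]

lemma genpos12 : GenPos ↑S12 := by
  intro p hp q hq r hr hpq hpr hqr
  obtain ⟨i, rfl⟩ := mem_S12.mp hp
  obtain ⟨j, rfl⟩ := mem_S12.mp hq
  obtain ⟨k, rfl⟩ := mem_S12.mp hr
  rw [odet_pts]
  exact_mod_cast odZ_ne i j k (fun e => hpq (congrArg pts e))
    (fun e => hpr (congrArg pts e)) (fun e => hqr (congrArg pts e))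

def TgtProp (x : Sym2 (Sym2 (ℝ × ℝ))) : Prop :=
  ∃ a b c d : ℝ × ℝ, x = s(s(a, b), s(c, d)) ∧
    a ∈ (S12 : Set (ℝ × ℝ)) ∧ b ∈ (S12 : Set (ℝ × ℝ)) ∧ c ∈ (S12 : Set (ℝ × ℝ)) ∧
    d ∈ (S12 : Set (ℝ × ℝ)) ∧ a ≠ b ∧ c ≠ d ∧
    ({a, b} : Set (ℝ × ℝ)) ∩ {c, d} = ∅ ∧
    (openSegment ℝ a b ∩ openSegment ℝ c d).Nonempty

lemma prop_of_Pq {i j k l : Fin 12} (h : Pq i j k l) :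
    TgtProp s(s(pts i, pts j), s(pts k, pts l)) := by
  obtain ⟨hij, hkl, hik, hil, hjk, hjl⟩ := Pq_distinct h
  refine ⟨pts i, pts j, pts k, pts l, rfl, mem_S12.mpr ⟨i, rfl⟩, mem_S12.mpr ⟨j, rfl⟩,
    mem_S12.mpr ⟨k, rfl⟩, mem_S12.mpr ⟨l, rfl⟩,
    fun e => hij (pts_inj e), fun e => hkl (pts_inj e), ?_, ?_⟩
  · apply Set.eq_empty_iff_forall_notMem.mpr
    rintro x ⟨hx1, hx2⟩
    simp only [Set.mem_insert_iff, Set.mem_singleton_iff] at hx1 hx2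
    rcases hx1 with rfl | rfl <;> rcases hx2 with h' | h'
    · exact hik (pts_inj h')
    · exact hil (pts_inj h')
    · exact hjk (pts_inj h')
    · exact hjl (pts_inj h')
  · have h1 : odet (pts i) (pts j) (pts k) ≠ 0 := by
      rw [odet_pts]; exact_mod_cast odZ_ne i j k hij hik hjk
    have h3 : odet (pts k) (pts l) (pts i) ≠ 0 := by
      rw [odet_pts]; exact_mod_cast odZ_ne k l i hkl hik.symm hil.symm
    refine (cross_iff h1 h3).mpr ⟨?_, ?_⟩
    · rw [odet_pts, odet_pts]; exact_mod_cast h.1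
    · rw [odet_pts, odet_pts]; exact_mod_cast h.2

noncomputable def Φ (t : {t : Fin 12 × Fin 12 × Fin 12 × Fin 12 // Qq t}) :
    {x : Sym2 (Sym2 (ℝ × ℝ)) // TgtProp x} :=
  ⟨s(s(pts t.1.1, pts t.1.2.1), s(pts t.1.2.2.1, pts t.1.2.2.2)), prop_of_Pq t.2.2.2.2⟩

lemma Φ_inj : Function.Injective Φ := by
  intro t t' h
  obtain ⟨⟨i, j, k, l⟩, hQ⟩ := t
  obtain ⟨⟨i', j', k', l'⟩, hQ'⟩ := t'
  have vo1 : (i:ℕ) < (j:ℕ) := hQ.1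
  have vo2 : (k:ℕ) < (l:ℕ) := hQ.2.1
  have vo3 : (i:ℕ) < (k:ℕ) := hQ.2.2.1
  have vo1' : (i':ℕ) < (j':ℕ) := hQ'.1
  have vo2' : (k':ℕ) < (l':ℕ) := hQ'.2.1
  have vo3' : (i':ℕ) < (k':ℕ) := hQ'.2.2.1
  have h' : s(s(pts i, pts j), s(pts k, pts l)) = s(s(pts i', pts j'), s(pts k', pts l')) :=
    congrArg Subtype.val h
  apply Subtype.ext
  simp only [Prod.mk.injEq]
  rw [Sym2.eq_iff] at h'
  rcases h' with ⟨hA, hB⟩ | ⟨hA, hB⟩ <;> rw [Sym2.eq_iff] at hA hB <;>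
      rcases hA with ⟨e1, e2⟩ | ⟨e1, e2⟩ <;> rcases hB with ⟨e3, e4⟩ | ⟨e3, e4⟩ <;>
    · have w1 := congrArg Fin.val (pts_inj e1)
      have w2 := congrArg Fin.val (pts_inj e2)
      have w3 := congrArg Fin.val (pts_inj e3)
      have w4 := congrArg Fin.val (pts_inj e4)
      refine ⟨Fin.ext ?_, Fin.ext ?_, Fin.ext ?_, Fin.ext ?_⟩ <;> omega

lemma canon (i j k l : Fin 12) (h : Pq i j k l) :
    ∃ a b c d : Fin 12, Qq (a, b, c, d) ∧
      s(s(pts a, pts b), s(pts c, pts d)) = s(s(pts i, pts j), s(pts k, pts l)) := by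
  obtain ⟨hij, hkl, -, -, -, -⟩ := Pq_distinct h
  obtain ⟨a, b, hab, hsab, hP1⟩ :
      ∃ a b, a < b ∧ s(pts a, pts b) = s(pts i, pts j) ∧ Pq a b k l := by
    rcases (Ne.lt_or_gt hij) with h' | h'
    · exact ⟨i, j, h', rfl, h⟩
    · exact ⟨j, i, h', Sym2.eq_swap, Pq_swap1 h⟩
  obtain ⟨c, d, hcd, hscd, hP2⟩ :
      ∃ c d, c < d ∧ s(pts c, pts d) = s(pts k, pts l) ∧ Pq a b c d := by
    rcases (Ne.lt_or_gt hkl) with h' | h'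
    · exact ⟨k, l, h', rfl, hP1⟩
    · exact ⟨l, k, h', Sym2.eq_swap, Pq_swap2 hP1⟩
  have hac : a ≠ c := (Pq_distinct hP2).2.2.1
  rcases (Ne.lt_or_gt hac) with h' | h'
  · exact ⟨a, b, c, d, ⟨hab, hcd, h', hP2⟩, by rw [hsab, hscd]⟩
  · refine ⟨c, d, a, b, ⟨hcd, hab, h', Pq_swap12 hP2⟩, ?_⟩
    rw [hsab, hscd]
    exact Sym2.eq_swap

lemma Φ_surj : Function.Surjective Φ := by
  rintro ⟨x, a, b, c, d, rfl, ha, hb, hc, hd, hab, hcd, hdisj, hne⟩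
  obtain ⟨i, rfl⟩ := mem_S12.mp ha
  obtain ⟨j, rfl⟩ := mem_S12.mp hb
  obtain ⟨k, rfl⟩ := mem_S12.mp hc
  obtain ⟨l, rfl⟩ := mem_S12.mp hd
  have hij : i ≠ j := fun e => hab (congrArg pts e)
  have hkl : k ≠ l := fun e => hcd (congrArg pts e)
  have hdisj' := Set.eq_empty_iff_forall_notMem.mp hdisj
  have hik : i ≠ k := fun e => hdisj' (pts i) ⟨by simp, by rw [congrArg pts e]; simp⟩
  have hil : i ≠ l := fun e => hdisj' (pts i) ⟨by simp, by rw [congrArg pts e]; simp⟩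
  have hjk : j ≠ k := fun e => hdisj' (pts j) ⟨by simp, by rw [congrArg pts e]; simp⟩
  have hjl : j ≠ l := fun e => hdisj' (pts j) ⟨by simp, by rw [congrArg pts e]; simp⟩
  have h1 : odet (pts i) (pts j) (pts k) ≠ 0 := by
    rw [odet_pts]; exact_mod_cast odZ_ne i j k hij hik hjk
  have h3 : odet (pts k) (pts l) (pts i) ≠ 0 := by
    rw [odet_pts]; exact_mod_cast odZ_ne k l i hkl hik.symm hil.symm
  obtain ⟨c1, c2⟩ := (cross_iff h1 h3).mp hne
  rw [odet_pts, odet_pts] at c1 c2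
  have hP : Pq i j k l := ⟨by exact_mod_cast c1, by exact_mod_cast c2⟩
  obtain ⟨a', b', c', d', hQ, heq⟩ := canon i j k l hP
  exact ⟨⟨(a', b', c', d'), hQ⟩, Subtype.ext heq⟩


/-- There exists a set of 12 points in the plane in general position with exactly 153
crossings. -/
theorem rectilinear_crossing_K12_attained :
    ∃ S : Finset (ℝ × ℝ), S.card = 12 ∧ GenPos ↑S ∧ cr ↑S = 153 := by
  refine ⟨S12, ?_, genpos12, ?_⟩
  · rw [S12, Finset.card_image_of_injective _ pts_inj, Finset.card_univ, Fintype.card_fin]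
  · have h0 : cr ↑S12 = Nat.card {x : Sym2 (Sym2 (ℝ × ℝ)) // TgtProp x} := rfl
    rw [h0, ← Nat.card_congr (Equiv.ofBijective Φ ⟨Φ_inj, Φ_surj⟩),
      Nat.card_eq_fintype_card, count]
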